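/- Let W_{1,1}, W_{1,2}, W_{2,1} be independent nonnegative-integer-valued random variables where W_{1,2} and W_{2,1} are geometric with the same parameter. Then W_{1,1} + max(W_{1,2}, W_{2,1}) + W_{1,1} has the same distribution as W_{2,1} + W_{1,1} + W_{1,2} (i.e. the 2×2 antidiagonally-symmetric and diagonally-symmetric last passage times coincide in law). -/

import Mathlib

open MeasureTheory ProbabilityTheory

/-- The rearrangement bijection on `ℕ³`. -/
def lppPsi : (ℕ × ℕ × ℕ) ≃ (ℕ × ℕ × ℕ) where
  toFun t := (min t.2.1 t.2.2, 2 * t.1 + (if t.2.2 < t.2.1 then 1 else 0),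
    max t.2.1 t.2.2 - min t.2.1 t.2.2 - (if t.2.2 < t.2.1 then 1 else 0))
  invFun t := if t.2.1 % 2 = 0 then (t.2.1 / 2, t.1, t.1 + t.2.2)
    else (t.2.1 / 2, t.1 + t.2.2 + 1, t.1)
  left_inv := by
    rintro ⟨a, b, c⟩
    by_cases h : c < b <;>
      simp only [h, if_true, if_false, Prod.ext_iff] <;>
      split_ifs <;> simp_all <;> omega
  right_inv := by
    rintro ⟨A, B, C⟩
    by_cases h : B % 2 = 0 <;>
      simp only [h, if_true, if_false, Prod.ext_iff] <;>
      split_ifs <;> simp_all <;> omega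

lemma lppPsi_sum (t : ℕ × ℕ × ℕ) :
    (lppPsi t).2.2 + (lppPsi t).1 + (lppPsi t).2.1
      = t.1 + max t.2.1 t.2.2 + t.1 := by
  obtain ⟨a, b, c⟩ := t
  simp only [lppPsi, Equiv.coe_fn_mk]
  split_ifs <;> omega

lemma lppPsi_exponent (t : ℕ × ℕ × ℕ) :
    2 * (lppPsi t).1 + (lppPsi t).2.1 + (lppPsi t).2.2
      = 2 * t.1 + t.2.1 + t.2.2 := by
  obtain ⟨a, b, c⟩ := t
  simp only [lppPsi, Equiv.coe_fn_mk]
  split_ifs <;> omega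

/-- for independent nonnegative-integer random variables `W11, W12, W21`
where `W11` is geometric with parameter `p²` and `W12`, `W21` are geometric with the
same parameter `p`, the 2×2 antidiagonally-symmetric last passage time
`W11 + max(W12, W21) + W11` has the same law as the diagonally-symmetric one
`W21 + W11 + W12`. -/
theorem lpp_2x2_equality_in_law {Ω : Type*} [MeasurableSpace Ω]
    (μ : Measure Ω) [IsProbabilityMeasure μ]
    (W11 W12 W21 : Ω → ℕ)
    (hm11 : Measurable W11) (hm12 : Measurable W12) (hm21 : Measurable W21)
    (p : ℝ) (hp0 : 0 < p) (hp1 : p < 1)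
    (h11 : ∀ k : ℕ, μ {ω | W11 ω = k} = ENNReal.ofReal ((1 - p ^ 2) * (p ^ 2) ^ k))
    (h12 : ∀ k : ℕ, μ {ω | W12 ω = k} = ENNReal.ofReal ((1 - p) * p ^ k))
    (h21 : ∀ k : ℕ, μ {ω | W21 ω = k} = ENNReal.ofReal ((1 - p) * p ^ k))
    (hind : iIndepFun (m := fun _ : Fin 3 => (inferInstance : MeasurableSpace ℕ))
      ![W11, W12, W21] μ) :
    Measure.map (fun ω => W11 ω + max (W12 ω) (W21 ω) + W11 ω) μ
      = Measure.map (fun ω => W21 ω + W11 ω + W12 ω) μ := by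
  classical
  set T : Ω → ℕ × ℕ × ℕ := fun ω => (W11 ω, W12 ω, W21 ω) with hT
  have hTm : Measurable T := hm11.prodMk (hm12.prodMk hm21)
  set ν : Measure (ℕ × ℕ × ℕ) := Measure.map T μ with hνdef
  set w : ℕ × ℕ × ℕ → ENNReal := fun t =>
    ENNReal.ofReal ((1 - p ^ 2) * ((1 - p) * (1 - p)) * p ^ (2 * t.1 + t.2.1 + t.2.2))
    with hw
  -- singleton masses of ν
  have hν : ∀ t : ℕ × ℕ × ℕ, ν {t} = w t := by
    rintro ⟨a, b, c⟩
    have hpre : T ⁻¹' {(a, b, c)} =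
        ⋂ i, (![W11, W12, W21] i) ⁻¹' ({![a, b, c] i} : Set ℕ) := by
      ext ω
      simp only [Set.mem_preimage, Set.mem_singleton_iff, Set.mem_iInter, Fin.forall_fin_succ,
        Fin.forall_fin_zero_pi, Matrix.cons_val_zero, Matrix.cons_val_one, Matrix.head_cons,
        Matrix.cons_val_succ, hT, Prod.mk.injEq]
      constructor
      · rintro ⟨h1, h2, h3⟩; exact ⟨h1, h2, h3, fun i => i.elim0⟩
      · rintro ⟨h1, h2, h3, -⟩; exact ⟨h1, h2, h3⟩
    have hmeas : ∀ i : Fin 3, MeasurableSet[(fun _ : Fin 3 =>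
        (inferInstance : MeasurableSpace ℕ)) i |>.comap (![W11, W12, W21] i)]
        ((![W11, W12, W21] i) ⁻¹' ({![a, b, c] i} : Set ℕ)) :=
      fun i => ⟨{![a, b, c] i}, measurableSet_singleton _, rfl⟩
    have hprod := hind.meas_iInter hmeas
    rw [hνdef, Measure.map_apply hTm (measurableSet_singleton _), hpre, hprod,
      Fin.prod_univ_three]
    simp only [Matrix.cons_val_zero, Matrix.cons_val_one, Matrix.head_cons,
      Matrix.cons_val_two, Matrix.tail_cons]
    have e1 : (W11 ⁻¹' {a}) = {ω | W11 ω = a} := rfl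
    have e2 : (W12 ⁻¹' {b}) = {ω | W12 ω = b} := rfl
    have e3 : (W21 ⁻¹' {c}) = {ω | W21 ω = c} := rfl
    rw [e1, e2, e3, h11 a, h12 b, h21 c]
    have hp2 : (0:ℝ) ≤ 1 - p ^ 2 := by nlinarith
    have hp1' : (0:ℝ) ≤ 1 - p := by linarith
    have hpa : (0:ℝ) ≤ (p ^ 2) ^ a := by positivity
    have hpb : (0:ℝ) ≤ p ^ b := by positivity
    rw [← ENNReal.ofReal_mul (by positivity), ← ENNReal.ofReal_mul (by positivity)]
    congr 1
    have hpa2 : ((p : ℝ) ^ 2) ^ a = p ^ (2 * a) := by rw [← pow_mul]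
    have hred : 2 * ((a, b, c) : ℕ × ℕ × ℕ).1 + ((a, b, c) : ℕ × ℕ × ℕ).2.1
        + ((a, b, c) : ℕ × ℕ × ℕ).2.2 = 2 * a + b + c := rfl
    rw [hpa2, hred, pow_add, pow_add]
    ring
  -- w is invariant under lppPsi
  have hwpsi : ∀ t, w (lppPsi t) = w t := by
    intro t
    simp only [hw]
    rw [lppPsi_exponent]
  -- ν is invariant under lppPsi
  have hmapψ : Measure.map (lppPsi : ℕ × ℕ × ℕ → ℕ × ℕ × ℕ) ν = ν := by
    apply MeasureTheory.Measure.ext_of_singleton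
    intro t
    rw [Measure.map_apply (measurable_of_countable _) (measurableSet_singleton _)]
    have hpre : (lppPsi : ℕ × ℕ × ℕ → ℕ × ℕ × ℕ) ⁻¹' {t} = {lppPsi.symm t} := by
      ext s
      simp [Equiv.eq_symm_apply, eq_comm]
    rw [hpre, hν, hν]
    conv_rhs => rw [← lppPsi.apply_symm_apply t]
    rw [hwpsi]
  -- conclude
  have hg1 : (fun ω => W11 ω + max (W12 ω) (W21 ω) + W11 ω)
      = (fun t : ℕ × ℕ × ℕ => t.1 + max t.2.1 t.2.2 + t.1) ∘ T := rfl
  have hg2 : (fun ω => W21 ω + W11 ω + W12 ω)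
      = (fun t : ℕ × ℕ × ℕ => t.2.2 + t.1 + t.2.1) ∘ T := rfl
  rw [hg1, hg2, ← Measure.map_map (measurable_of_countable _) hTm,
    ← Measure.map_map (measurable_of_countable _) hTm]
  show Measure.map _ ν = Measure.map _ ν
  have key : (fun t : ℕ × ℕ × ℕ => t.1 + max t.2.1 t.2.2 + t.1)
      = (fun t : ℕ × ℕ × ℕ => t.2.2 + t.1 + t.2.1) ∘ (lppPsi : ℕ × ℕ × ℕ → ℕ × ℕ × ℕ) := by
    funext t
    exact (lppPsi_sum t).symm
  rw [key, ← Measure.map_map (measurable_of_countable _) (measurable_of_countable _), hmapψ]
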